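/- Let d ≥ 1, let ψ : Fin m → (Fin d → ℂ) be unit vectors (∑ j, ‖ψ i j‖² = 1 for each i) and w : Fin m → ℝ with w i > 0, forming a weighted complex-projective 2-design: ∑ i, (w i : ℂ) • (ψᵢψᵢ*) = (d : ℂ)⁻¹ • 1 and ∑ i, (w i : ℂ) • ((ψᵢψᵢ*) ⊗ₖ (ψᵢψᵢ*)) = (2 / (d * (d + 1)) : ℂ) • P_sym, where ψᵢψᵢ* is the rank-one matrix with (j,k) entry ψ i j * star (ψ i k), and P_sym is the matrix indexed by (Fin d × Fin d) × (Fin d × Fin d) with entry P_sym (i,j) (k,l) = (1/2) * (if i = k ∧ j = l then 1 else 0) + (1/2) * (if i = l ∧ j = k then 1 else 0). Then A defined by A i = ((d * w i) : ℂ) • (ψᵢψᵢ*) is a measurement, and its Fisher information matrix satisfies F(A) = (2 / (d + 1) : ℂ) • P_sym^Γ, where the partial transpose is given entrywise by P^Γ ((i,j),(k,l)) = P ((i,l),(k,j)). -/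

import Mathlib

open Matrix
open scoped Kronecker ComplexOrder

noncomputable section

/-- A measurement (POVM): a finite family of positive semidefinite matrices summing to `1`. -/
def IsMeasurement {ι κ : Type*} [Fintype ι] [DecidableEq ι] [Fintype κ]
    (A : κ → Matrix ι ι ℂ) : Prop :=
  (∀ x, (A x).PosSemidef) ∧ ∑ x, A x = 1

/-- `A` is a post-processing of `B`: `A ⪯ B`. -/
def PostProc {ι : Type*} {n m : ℕ}
    (A : Fin n → Matrix ι ι ℂ) (B : Fin m → Matrix ι ι ℂ) : Prop :=
  ∃ μ : Fin n → Fin m → ℝ,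
    (∀ x y, 0 ≤ μ x y) ∧ (∀ y, ∑ x, μ x y = 1) ∧
    (∀ x, A x = ∑ y, (μ x y : ℂ) • B y)

/-- The outer product `|E⟩⟨F|` of the vectorizations of two matrices. -/
def outerProd {ι : Type*} (E F : Matrix ι ι ℂ) : Matrix (ι × ι) (ι × ι) ℂ :=
  Matrix.of fun p q => E p.1 p.2 * star (F q.1 q.2)

/-- The (un-normalized) Fisher information map of a measurement. -/
noncomputable def Fisher {ι κ : Type*} [Fintype ι] [Fintype κ]
    (A : κ → Matrix ι ι ℂ) : Matrix (ι × ι) (ι × ι) ℂ :=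
  ∑ x, (Matrix.trace (A x))⁻¹ • outerProd (A x) (A x)

open scoped MatrixOrder in
/-- The generalized Fisher information map of a measurement, relative to a
positive definite state `ρ` (with positive semidefinite square root `ρ^{1/2}`). -/
noncomputable def FisherRho {ι κ : Type*} [Fintype ι] [DecidableEq ι] [Fintype κ]
    {ρ : Matrix ι ι ℂ} (hρ : ρ.PosDef) (A : κ → Matrix ι ι ℂ) :
    Matrix (ι × ι) (ι × ι) ℂ :=
  ∑ x, (Matrix.trace (ρ * A x))⁻¹ •
    outerProd (CFC.sqrt ρ * A x) (CFC.sqrt ρ * A x)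

/-- The height of a finite family of self-adjoint matrices: the infimum of the traces of
Hermitian matrices dominating every member in the Loewner order. -/
noncomputable def height {ι κ : Type*} [Fintype ι] [Fintype κ]
    (X : κ → Matrix ι ι ℂ) : ℝ :=
  sInf { t : ℝ | ∃ H : Matrix ι ι ℂ, H.IsHermitian ∧
    (∀ i, (H - X i).PosSemidef) ∧ t = (Matrix.trace H).re }
/-- The Fisher information matrix of a weighted 2-design POVM is
2/(d+1) times the partial transpose of the symmetric projection. -/
theorem stmt13 {d m : ℕ} (hd : 1 ≤ d) (ψ : Fin m → Fin d → ℂ) (w : Fin m → ℝ)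
    (hw : ∀ i, 0 < w i)
    (hunit : ∀ i, ∑ j, ‖ψ i j‖ ^ 2 = 1)
    (P : Fin m → Matrix (Fin d) (Fin d) ℂ)
    (hP : ∀ i, P i = Matrix.of fun j k => ψ i j * star (ψ i k))
    (Psym : Matrix (Fin d × Fin d) (Fin d × Fin d) ℂ)
    (hPsym : ∀ p q : Fin d × Fin d, Psym p q =
      (1 / 2) * (if p.1 = q.1 ∧ p.2 = q.2 then 1 else 0) +
      (1 / 2) * (if p.1 = q.2 ∧ p.2 = q.1 then 1 else 0))
    (hdesign1 : ∑ i, (w i : ℂ) • P i = ((d : ℂ))⁻¹ • 1)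
    (hdesign2 : ∑ i, (w i : ℂ) • (P i ⊗ₖ P i) =
      ((2 : ℂ) / ((d : ℂ) * ((d : ℂ) + 1))) • Psym)
    (A : Fin m → Matrix (Fin d) (Fin d) ℂ)
    (hAdef : ∀ i, A i = ((d : ℂ) * (w i : ℂ)) • P i) :
    IsMeasurement A ∧
    Fisher A = ((2 : ℂ) / ((d : ℂ) + 1)) •
      Matrix.of (fun p q : Fin d × Fin d => Psym (p.1, q.2) (q.1, p.2)) := by

  have hd0 : (d : ℂ) ≠ 0 := Nat.cast_ne_zero.mpr (by omega)
  have hd1 : (d : ℂ) + 1 ≠ 0 := by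
    have : ((d + 1 : ℕ) : ℂ) ≠ 0 := Nat.cast_ne_zero.mpr (by omega)
    push_cast at this
    exact this
  have hw0 : ∀ i, (w i : ℂ) ≠ 0 := fun i =>
    Complex.ofReal_ne_zero.mpr (ne_of_gt (hw i))
  have hstarw : ∀ i, star ((w i : ℂ)) = (w i : ℂ) := fun i => by
    simp [Complex.star_def, Complex.conj_ofReal]
  have hstard : star ((d : ℂ)) = (d : ℂ) := by simp
  -- trace of P i is 1
  have htrP : ∀ i, (P i).trace = 1 := by
    intro i
    rw [hP i]
    have h1 : ∀ j, ψ i j * star (ψ i j) = ((‖ψ i j‖ ^ 2 : ℝ) : ℂ) := by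
      intro j
      rw [Complex.star_def, Complex.mul_conj]
      norm_cast
      rw [Complex.normSq_eq_norm_sq]
    unfold Matrix.trace Matrix.diag
    simp only [Matrix.of_apply, h1]
    rw [← Complex.ofReal_sum, hunit i, Complex.ofReal_one]
  -- P i is PSD
  have hPpsd : ∀ i, (P i).PosSemidef := by
    intro i
    rw [Matrix.posSemidef_iff_dotProduct_mulVec]
    constructor
    · rw [hP i]
      ext j k
      simp [Matrix.conjTranspose_apply, mul_comm]
    · intro x
      have key : star x ⬝ᵥ (P i) *ᵥ x
          = (∑ j, star (x j) * ψ i j) * star (∑ j, star (x j) * ψ i j) := by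
        rw [hP i]
        simp only [dotProduct, Matrix.mulVec, Matrix.of_apply, star_sum, star_mul',
          star_star, Pi.star_apply, Finset.mul_sum, Finset.sum_mul]
        rw [Finset.sum_comm]
        refine Finset.sum_congr rfl fun j _ => Finset.sum_congr rfl fun k _ => by ring
      rw [key]
      exact mul_star_self_nonneg _
  -- smul of PSD by nonneg real cast stays PSD
  have hsmulpsd : ∀ (c : ℝ), 0 ≤ c → ∀ (M : Matrix (Fin d) (Fin d) ℂ), M.PosSemidef →
      ((c : ℂ) • M).PosSemidef := by
    intro c hc M hM
    rw [Matrix.posSemidef_iff_dotProduct_mulVec]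
    constructor
    · unfold Matrix.IsHermitian
      rw [Matrix.conjTranspose_smul, hM.1]
      congr 1
      simp [Complex.star_def, Complex.conj_ofReal]
    · intro x
      rw [Matrix.smul_mulVec, dotProduct_smul]
      have h := hM.dotProduct_mulVec_nonneg x
      rw [Complex.nonneg_iff] at h ⊢
      constructor
      · simp only [smul_eq_mul, Complex.mul_re, Complex.ofReal_re, Complex.ofReal_im,
          zero_mul, sub_zero]
        exact mul_nonneg hc h.1
      · have him : (star x ⬝ᵥ M *ᵥ x).im = 0 := h.2.symm
        simp only [smul_eq_mul, Complex.mul_im, Complex.ofReal_re, Complex.ofReal_im,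
          zero_mul, add_zero, him, mul_zero]
  have hApsd : ∀ i, (A i).PosSemidef := by
    intro i
    rw [hAdef i]
    have hcoef : ((d : ℂ) * (w i : ℂ)) = (((d : ℝ) * w i : ℝ) : ℂ) := by push_cast; ring
    rw [hcoef]
    exact hsmulpsd _ (mul_nonneg (Nat.cast_nonneg d) (hw i).le) _ (hPpsd i)
  have hsum : ∑ i, A i = 1 := by
    have h : ∑ i, A i = (d : ℂ) • ∑ i, (w i : ℂ) • P i := by
      rw [Finset.smul_sum]
      exact Finset.sum_congr rfl fun i _ => by rw [hAdef i, mul_smul]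
    rw [h, hdesign1, smul_smul, mul_inv_cancel₀ hd0, one_smul]
  refine ⟨⟨hApsd, hsum⟩, ?_⟩
  -- Fisher computation
  have htrA : ∀ i, (A i).trace = (d : ℂ) * (w i : ℂ) := by
    intro i
    rw [hAdef i, Matrix.trace_smul, htrP, smul_eq_mul, mul_one]
  have hFish : Fisher A = ∑ i, ((d : ℂ) * (w i : ℂ)) • outerProd (P i) (P i) := by
    unfold Fisher
    refine Finset.sum_congr rfl fun i _ => ?_
    have houter : outerProd (A i) (A i)
        = (((d : ℂ) * (w i : ℂ)) * ((d : ℂ) * (w i : ℂ))) • outerProd (P i) (P i) := by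
      ext p q
      rw [hAdef i]
      simp only [outerProd, Matrix.of_apply, Matrix.smul_apply, smul_eq_mul, star_mul',
        hstarw, hstard]
      ring
    rw [htrA i, houter, smul_smul]
    congr 1
    field_simp
  rw [hFish]
  ext p q
  have h2 := congrFun (congrFun hdesign2 (p.1, q.2)) (q.1, p.2)
  simp only [Matrix.sum_apply, Matrix.smul_apply, Matrix.kroneckerMap_apply,
    smul_eq_mul] at h2
  simp only [Matrix.sum_apply, Matrix.smul_apply, Matrix.of_apply, smul_eq_mul, outerProd]
  calc ∑ i, (d : ℂ) * (w i : ℂ) * (P i p.1 p.2 * star (P i q.1 q.2))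
      = (d : ℂ) * ∑ i, (w i : ℂ) * (P i (p.1, q.2).1 (q.1, p.2).1 *
          P i (p.1, q.2).2 (q.1, p.2).2) := by
        rw [Finset.mul_sum]
        refine Finset.sum_congr rfl fun i _ => ?_
        rw [hP i]
        simp only [Matrix.of_apply, star_mul', star_star]
        ring
    _ = (d : ℂ) * ((2 : ℂ) / ((d : ℂ) * ((d : ℂ) + 1)) * Psym (p.1, q.2) (q.1, p.2)) := by
        rw [h2]
    _ = (2 : ℂ) / ((d : ℂ) + 1) * Psym (p.1, q.2) (q.1, p.2) := by
        field_simp
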